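/- For every natural number m, the finite simple continued fraction [29,29,…,29] consisting of m+1 twenty-nines equals F_{7m+14}/F_{7m+7}. -/

import Mathlib

def cf : List ℤ → ℚ
  | [] => 0
  | [a] => (a : ℚ)
  | a :: b :: l => (a : ℚ) + (cf (b :: l))⁻¹

lemma fib_add_14 (n : ℕ) : Nat.fib (n + 14) = 29 * Nat.fib (n + 7) + Nat.fib n := by
  have h : ∀ k, Nat.fib (k + 2) = Nat.fib k + Nat.fib (k + 1) := fun k => Nat.fib_add_two
  have h0 := h n
  have h1 : Nat.fib (n + 3) = Nat.fib (n + 1) + Nat.fib (n + 2) := h (n + 1)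
  have h2 : Nat.fib (n + 4) = Nat.fib (n + 2) + Nat.fib (n + 3) := h (n + 2)
  have h3 : Nat.fib (n + 5) = Nat.fib (n + 3) + Nat.fib (n + 4) := h (n + 3)
  have h4 : Nat.fib (n + 6) = Nat.fib (n + 4) + Nat.fib (n + 5) := h (n + 4)
  have h5 : Nat.fib (n + 7) = Nat.fib (n + 5) + Nat.fib (n + 6) := h (n + 5)
  have h6 : Nat.fib (n + 8) = Nat.fib (n + 6) + Nat.fib (n + 7) := h (n + 6)
  have h7 : Nat.fib (n + 9) = Nat.fib (n + 7) + Nat.fib (n + 8) := h (n + 7)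
  have h8 : Nat.fib (n + 10) = Nat.fib (n + 8) + Nat.fib (n + 9) := h (n + 8)
  have h9 : Nat.fib (n + 11) = Nat.fib (n + 9) + Nat.fib (n + 10) := h (n + 9)
  have h10 : Nat.fib (n + 12) = Nat.fib (n + 10) + Nat.fib (n + 11) := h (n + 10)
  have h11 : Nat.fib (n + 13) = Nat.fib (n + 11) + Nat.fib (n + 12) := h (n + 11)
  have h12 : Nat.fib (n + 14) = Nat.fib (n + 12) + Nat.fib (n + 13) := h (n + 12)
  omega

theorem cf_all_twentynines_fib (m : ℕ) :
    cf (List.replicate (m + 1) 29) =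
      (Nat.fib (7 * m + 14) : ℚ) / (Nat.fib (7 * m + 7) : ℚ) := by
  induction m with
  | zero => norm_num [cf, List.replicate]
  | succ k ih =>
    have hrep : List.replicate (k + 1 + 1) (29 : ℤ) = 29 :: List.replicate (k + 1) 29 := rfl
    have hrep2 : List.replicate (k + 1) (29 : ℤ) = 29 :: List.replicate k 29 := rfl
    rw [hrep, hrep2, cf, ← hrep2, ih]
    have hpos1 : 0 < Nat.fib (7 * k + 7) := Nat.fib_pos.mpr (by omega)
    have hpos2 : 0 < Nat.fib (7 * k + 14) := Nat.fib_pos.mpr (by omega)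
    have hfib : Nat.fib (7 * (k + 1) + 14) = 29 * Nat.fib (7 * k + 14) + Nat.fib (7 * k + 7) := by
      have := fib_add_14 (7 * k + 7)
      have e1 : 7 * k + 7 + 14 = 7 * (k + 1) + 14 := by ring
      have e2 : 7 * k + 7 + 7 = 7 * k + 14 := by ring
      rw [e1, e2] at this
      exact this
    have hfib2 : 7 * (k + 1) + 7 = 7 * k + 14 := by ring
    rw [hfib2, hfib]
    have h1 : (Nat.fib (7 * k + 7) : ℚ) ≠ 0 := by positivity
    have h2 : (Nat.fib (7 * k + 14) : ℚ) ≠ 0 := by positivity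
    field_simp
    push_cast
    ring
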